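/- Let τ be a linear functional on ℂ⟨A,B⟩ (two non-commuting variables) satisfying the Ising Schwinger-Dyson equations τ((W₁'(A) − B)P) = τ⊗τ(D_A P) and τ((W₂'(B) − A)P) = τ⊗τ(D_B P) for all polynomials P, with τ(1) = 1, where W₁, W₂ are fixed polynomials. Then τ is uniquely determined by its restriction to polynomials in A alone: for every monomial P, τ(P) is a universal polynomial expression in the values {τ(Q(A)) : Q monomial in A}, obtained by induction on the degree of P in B via τ(BP) = −τ⊗τ(D_A P) + τ(W₁'(A)P). -/

import Mathlib

/-- Occurrences of the letter `i` in the word `P` (decompositions `P = P₁ X_i P₂`). -/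
def occurrences {m : ℕ} (i : Fin m) (P : List (Fin m)) : Finset (Fin P.length) :=
  Finset.univ.filter (fun k => P.get k = i)

/-- `τ` is a tracial solution of the Ising Schwinger-Dyson equations
`τ((W₁'(A) − B)P) = τ⊗τ(D_A P)` and `τ((W₂'(B) − A)P) = τ⊗τ(D_B P)`,
where words in `Fin 2` encode monomials in `A` (letter `0`) and `B` (letter `1`). -/
def IsIsingSD (W₁ W₂ : Polynomial ℝ) (τ : List (Fin 2) → ℝ) : Prop :=
  τ [] = 1 ∧
  (∀ P Q : List (Fin 2), τ (P ++ Q) = τ (Q ++ P)) ∧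
  (∀ P : List (Fin 2),
    (∑ k ∈ Finset.range ((Polynomial.derivative W₁).natDegree + 1),
        (Polynomial.derivative W₁).coeff k * τ (List.replicate k (0 : Fin 2) ++ P))
      - τ ((1 : Fin 2) :: P)
    = ∑ k ∈ occurrences (0 : Fin 2) P,
        τ (P.take (k : ℕ)) * τ (P.drop ((k : ℕ) + 1))) ∧
  (∀ P : List (Fin 2),
    (∑ k ∈ Finset.range ((Polynomial.derivative W₂).natDegree + 1),
        (Polynomial.derivative W₂).coeff k * τ (List.replicate k (1 : Fin 2) ++ P))
      - τ ((0 : Fin 2) :: P)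
    = ∑ k ∈ occurrences (1 : Fin 2) P,
        τ (P.take (k : ℕ)) * τ (P.drop ((k : ℕ) + 1)))

/-- A tracial solution of the Ising Schwinger-Dyson equations is uniquely determined
by its restriction to polynomials in `A` alone: two solutions agreeing on all words
`A^k` agree on every monomial. -/
theorem ising_SD_determined_by_A_marginal
    (W₁ W₂ : Polynomial ℝ) (τ₁ τ₂ : List (Fin 2) → ℝ)
    (h₁ : IsIsingSD W₁ W₂ τ₁) (h₂ : IsIsingSD W₁ W₂ τ₂)
    (hagree : ∀ k : ℕ, τ₁ (List.replicate k (0 : Fin 2)) = τ₂ (List.replicate k (0 : Fin 2))) :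
    ∀ P : List (Fin 2), τ₁ P = τ₂ P := by

  obtain ⟨-, h1t, h1A, -⟩ := h₁
  obtain ⟨-, h2t, h2A, -⟩ := h₂
  suffices H : ∀ n : ℕ, ∀ P : List (Fin 2), P.count 1 ≤ n → τ₁ P = τ₂ P by
    intro P; exact H (P.count 1) P le_rfl
  intro n
  induction n with
  | zero =>
    intro P hP
    have h0 : P = List.replicate P.length (0 : Fin 2) := by
      rw [List.eq_replicate_iff]
      refine ⟨rfl, fun b hb => ?_⟩
      have hb1 : b ≠ 1 := by
        intro h; subst h
        have := List.count_pos_iff.mpr hb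
        omega
      have : b.val < 2 := b.isLt
      have : b.val ≠ 1 := fun h => hb1 (Fin.ext h)
      exact Fin.ext (by omega)
    rw [h0, hagree]
  | succ n ih =>
    intro P hP
    rcases Nat.lt_or_ge (P.count 1) (n+1) with h | h
    · exact ih P (Nat.lt_succ_iff.mp h)
    have hc : P.count 1 = n + 1 := le_antisymm hP h
    have hmem : (1 : Fin 2) ∈ P := by
      rw [← List.count_pos_iff]; omega
    obtain ⟨X, Y, rfl⟩ := List.append_of_mem hmem
    set Q : List (Fin 2) := Y ++ X with hQdef
    have hQ : Q.count 1 = n := by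
      simp only [List.count_append, List.count_cons] at hc
      simp only [beq_self_eq_true, if_true] at hc
      simp only [hQdef, List.count_append]
      omega
    have e1 : τ₁ (X ++ 1 :: Y) = τ₁ ((1 : Fin 2) :: Q) := by
      rw [h1t]; simp [hQdef]
    have e2 : τ₂ (X ++ 1 :: Y) = τ₂ ((1 : Fin 2) :: Q) := by
      rw [h2t]; simp [hQdef]
    rw [e1, e2]
    have eq1 := h1A Q
    have eq2 := h2A Q
    have sum1 : (∑ k ∈ Finset.range ((Polynomial.derivative W₁).natDegree + 1),
        (Polynomial.derivative W₁).coeff k * τ₁ (List.replicate k (0 : Fin 2) ++ Q))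
      = ∑ k ∈ Finset.range ((Polynomial.derivative W₁).natDegree + 1),
        (Polynomial.derivative W₁).coeff k * τ₂ (List.replicate k (0 : Fin 2) ++ Q) := by
      refine Finset.sum_congr rfl fun k _ => ?_
      congr 1
      refine ih _ ?_
      rw [List.count_append, List.count_replicate]
      simp [hQ]
    have sum2 : (∑ k ∈ occurrences (0 : Fin 2) Q,
        τ₁ (Q.take (k : ℕ)) * τ₁ (Q.drop ((k : ℕ) + 1)))
      = ∑ k ∈ occurrences (0 : Fin 2) Q,
        τ₂ (Q.take (k : ℕ)) * τ₂ (Q.drop ((k : ℕ) + 1)) := by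
      refine Finset.sum_congr rfl fun k hk => ?_
      have hk0 : Q.get k = 0 := by
        simpa [occurrences] using hk
      have hsplit : (Q.take (k : ℕ)).count 1 + (Q.drop ((k : ℕ) + 1)).count 1 = n := by
        have hlt : (k : ℕ) < Q.length := k.isLt
        have hdrop : Q.drop (k : ℕ) = Q.get k :: Q.drop ((k : ℕ) + 1) :=
          List.drop_eq_getElem_cons hlt
        have := hQ
        rw [← List.take_append_drop (k : ℕ) Q, hdrop, hk0] at this
        simp at this
        omega
      rw [ih _ (by omega), ih _ (by omega)]
    have key1 : τ₁ ((1 : Fin 2) :: Q) = τ₂ ((1 : Fin 2) :: Q) := by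
      rw [sum1, sum2] at eq1
      linarith [eq1, eq2]
    exact key1
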